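/- For every δ > 0 there exist a time k_δ ∈ ℕ and a constant c > 0 such that for every token index i and every time k ≥ k_δ: if dist(z_i^k, S) > δ, then ‖z_i^{k+1}‖² ≥ ‖z_i^k‖² + c. That is, the squared norm of a token increases by a uniform positive amount whenever the token is outside the δ-neighborhood of S, after sufficiently many layers. -/

import Mathlib

open scoped RealInnerProductSpace BigOperators Classical
open Filter Metric

noncomputable section

/-- The hardmax attention (argmax) index set `C_i` for a token configuration `z`
(attention matrix `A = I`): the set of indices `j` maximizing `⟪z_i, z_j⟫`. -/
def attn {d n : ℕ} (z : Fin n → EuclideanSpace ℝ (Fin d)) (i : Fin n) : Finset (Fin n) :=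
  Finset.univ.filter fun j => (⟪z i, z j⟫ = ⨆ ℓ, ⟪z i, z ℓ⟫)

/-- The pure-attention hardmax transformer dynamics with step-size `α > 0` and `A = I`:
`z_i^{k+1} = z_i^k + (α/(1+α))·(1/|C_i^k|)·Σ_{j ∈ C_i^k} (z_j^k − z_i^k)`. -/
def IsDyn {d n : ℕ} (α : ℝ) (z : ℕ → Fin n → EuclideanSpace ℝ (Fin d)) : Prop :=
  ∀ k i, z (k + 1) i = z k i +
    (α / (1 + α)) • (((attn (z k) i).card : ℝ)⁻¹ • ∑ j ∈ attn (z k) i, (z k j - z k i))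

/-- The limiting set `K = ⋂ₖ co(Z^k)`, the intersection of the convex hulls of the token
configurations over all times. -/
def limitK {d n : ℕ} (z : ℕ → Fin n → EuclideanSpace ℝ (Fin d)) :
    Set (EuclideanSpace ℝ (Fin d)) :=
  ⋂ k, convexHull ℝ (Set.range (z k))

/-- The cluster set `S = { x ∈ K : max_{v ∈ V} ⟪v − x, x⟫ = 0 }`, where `V` is the set of
extreme points (vertices) of `K`; `max … = 0` is phrased as: `0` is the greatest element of
the set of values `⟪v − x, x⟫`, `v ∈ V`. -/
def clusterSet {d : ℕ} (K : Set (EuclideanSpace ℝ (Fin d))) :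
    Set (EuclideanSpace ℝ (Fin d)) :=
  {x ∈ K | IsGreatest ((fun v => ⟪v - x, x⟫) '' (Set.extremePoints ℝ K)) 0}

namespace HardmaxAux

variable {d n : ℕ}

lemma attn_nonempty (hn : 0 < n) (z : Fin n → EuclideanSpace ℝ (Fin d)) (i : Fin n) :
    (attn z i).Nonempty := by
  have : Nonempty (Fin n) := ⟨⟨0, hn⟩⟩
  obtain ⟨j, hj⟩ := Finite.exists_max (fun ℓ => ⟪z i, z ℓ⟫)
  refine ⟨j, ?_⟩
  simp only [attn, Finset.mem_filter, Finset.mem_univ, true_and]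
  exact le_antisymm (le_ciSup (f := fun ℓ => ⟪z i, z ℓ⟫) (Set.Finite.bddAbove (Set.finite_range _)) j) (ciSup_le hj)

lemma inner_eq_of_mem_attn {z : Fin n → EuclideanSpace ℝ (Fin d)} {i j : Fin n}
    (hj : j ∈ attn z i) : ⟪z i, z j⟫ = ⨆ ℓ, ⟪z i, z ℓ⟫ := by
  simpa [attn] using hj

/-- The dynamics rewritten as a convex combination step towards the argmax centroid. -/
lemma step_eq (hn : 0 < n) {α : ℝ} {z : ℕ → Fin n → EuclideanSpace ℝ (Fin d)}
    (hdyn : IsDyn α z) (k : ℕ) (i : Fin n) :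
    z (k+1) i = z k i + (α/(1+α)) •
      ((((attn (z k) i).card : ℝ)⁻¹ • ∑ j ∈ attn (z k) i, z k j) - z k i) := by
  have hcard : ((attn (z k) i).card : ℝ) ≠ 0 := by
    have := Finset.card_pos.mpr (attn_nonempty hn (z k) i)
    positivity
  rw [hdyn k i]
  congr 2
  rw [Finset.sum_sub_distrib, Finset.sum_const, smul_sub]
  congr 1
  rw [← Nat.cast_smul_eq_nsmul ℝ, smul_smul, inv_mul_cancel₀ hcard, one_smul]

lemma mem_hull_step (hn : 0 < n) {α : ℝ} (hα : 0 < α)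
    {z : ℕ → Fin n → EuclideanSpace ℝ (Fin d)} (hdyn : IsDyn α z) (k : ℕ) (i : Fin n) :
    z (k+1) i ∈ convexHull ℝ (Set.range (z k)) := by
  set θ := α/(1+α) with hθ
  have hθ0 : 0 ≤ θ := by positivity
  have hθ1 : θ ≤ 1 := by rw [hθ, div_le_one (by linarith)]; linarith
  set A := attn (z k) i with hA
  have hcardpos : 0 < (A.card : ℝ) := by
    exact_mod_cast Finset.card_pos.mpr (attn_nonempty hn (z k) i)
  have hm : ((A.card : ℝ)⁻¹ • ∑ j ∈ A, z k j) ∈ convexHull ℝ (Set.range (z k)) := by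
    have hcm : ((A.card : ℝ)⁻¹ • ∑ j ∈ A, z k j)
        = A.centerMass (fun _ => (1:ℝ)) (z k) := by
      simp [Finset.centerMass]
    rw [hcm]
    refine Finset.centerMass_mem_convexHull _ (fun _ _ => zero_le_one) ?_
      (fun j _ => Set.mem_range_self j)
    simpa using hcardpos
  have hx : z k i ∈ convexHull ℝ (Set.range (z k)) :=
    subset_convexHull ℝ _ (Set.mem_range_self i)
  have hcomb := (convex_convexHull ℝ (Set.range (z k))) hx hm
    (by linarith : (0:ℝ) ≤ 1 - θ) hθ0 (by ring)
  rw [step_eq hn hdyn k i]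
  convert hcomb using 1
  rw [smul_sub, sub_smul, one_smul]
  abel

/-- Squared norm growth: `‖z^{k+1}‖² ≥ ‖z^k‖² + 2θ (M - ‖z^k‖²)` with `M` the argmax value. -/
lemma growth (hn : 0 < n) {α : ℝ} (hα : 0 < α)
    {z : ℕ → Fin n → EuclideanSpace ℝ (Fin d)} (hdyn : IsDyn α z) (k : ℕ) (i : Fin n) :
    ‖z k i‖^2 + 2*(α/(1+α))*((⨆ ℓ, ⟪z k i, z k ℓ⟫) - ‖z k i‖^2) ≤ ‖z (k+1) i‖^2 := by
  set θ := α/(1+α) with hθ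
  set x := z k i with hx
  set A := attn (z k) i with hA
  set m := ((A.card : ℝ)⁻¹ • ∑ j ∈ A, z k j) with hm
  have hcard : ((A.card : ℝ)) ≠ 0 := by
    have := Finset.card_pos.mpr (attn_nonempty hn (z k) i)
    positivity
  have hxm : ⟪x, m⟫ = ⨆ ℓ, ⟪x, z k ℓ⟫ := by
    rw [hm, real_inner_smul_right, inner_sum]
    rw [Finset.sum_congr rfl (fun j hj => inner_eq_of_mem_attn (hA ▸ hj)),
      Finset.sum_const, nsmul_eq_mul]
    field_simp
    rfl
  have hstep : z (k+1) i = x + θ • (m - x) := step_eq hn hdyn k i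
  rw [hstep, norm_add_sq_real]
  have h1 : ⟪x, θ • (m - x)⟫ = θ * ((⨆ ℓ, ⟪x, z k ℓ⟫) - ‖x‖^2) := by
    rw [real_inner_smul_right, inner_sub_right, real_inner_self_eq_norm_sq, hxm]
  rw [h1]
  nlinarith [sq_nonneg ‖θ • (m - x)‖]

lemma inner_le_isup (hn : 0 < n) (w : Fin n → EuclideanSpace ℝ (Fin d))
    (x : EuclideanSpace ℝ (Fin d)) :
    ∀ y ∈ convexHull ℝ (Set.range w), ⟪x, y⟫ ≤ ⨆ ℓ, ⟪x, w ℓ⟫ := by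
  have : Nonempty (Fin n) := ⟨⟨0, hn⟩⟩
  intro y hy
  have hconv : Convex ℝ {y : EuclideanSpace ℝ (Fin d) | ⟪x, y⟫ ≤ ⨆ ℓ, ⟪x, w ℓ⟫} :=
    convex_halfSpace_le ⟨fun a b => inner_add_right x a b,
      fun c a => real_inner_smul_right x a c⟩ _
  refine convexHull_min ?_ hconv hy
  rintro p ⟨ℓ, rfl⟩
  exact le_ciSup (f := fun ℓ => ⟪x, w ℓ⟫) (Set.Finite.bddAbove (Set.finite_range _)) ℓ

end HardmaxAux

set_option maxHeartbeats 1000000 in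
open HardmaxAux in
/-- After sufficiently many layers, the squared norm of a token increases by a uniform
positive amount whenever the token lies outside the `δ`-neighborhood of `S`. -/
theorem sq_norm_strict_growth_away_from_clusterSet {d n : ℕ} (hd : 0 < d) (hn : 0 < n) (α : ℝ) (hα : 0 < α)
    (z : ℕ → Fin n → EuclideanSpace ℝ (Fin d)) (hdyn : IsDyn α z)
    (hdist : ∀ i j : Fin n, i ≠ j → z 0 i ≠ z 0 j) (hnz : ∀ i, z 0 i ≠ 0) :
    ∀ δ : ℝ, 0 < δ → ∃ (kδ : ℕ) (c : ℝ), 0 < c ∧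
      ∀ (i : Fin n) (k : ℕ), kδ ≤ k →
        δ < infDist (z k i) (clusterSet (limitK z)) →
        ‖z k i‖ ^ 2 + c ≤ ‖z (k + 1) i‖ ^ 2 := by
  intro δ hδ
  have hne : Nonempty (Fin n) := ⟨⟨0, hn⟩⟩
  set θ := α/(1+α) with hθdef
  have hθpos : 0 < θ := by positivity
  set C : ℕ → Set (EuclideanSpace ℝ (Fin d)) := fun k => convexHull ℝ (Set.range (z k))
    with hCdef
  have hCcomp : ∀ k, IsCompact (C k) := fun k => (Set.finite_range (z k)).isCompact_convexHull ℝ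
  have hCconv : ∀ k, Convex ℝ (C k) := fun k => convex_convexHull ℝ _
  have hCne : ∀ k, (C k).Nonempty := fun k =>
    ⟨z k ⟨0, hn⟩, subset_convexHull ℝ _ (Set.mem_range_self _)⟩
  have hsucc : ∀ k, C (k+1) ⊆ C k := fun k =>
    convexHull_min (by rintro p ⟨i, rfl⟩; exact mem_hull_step hn hα hdyn k i) (hCconv k)
  have hmono : ∀ {k l : ℕ}, k ≤ l → C l ⊆ C k := by
    intro k l h
    induction h with
    | refl => exact subset_rfl
    | step h ih => exact (hsucc _).trans ih
  set K := limitK z with hKdef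
  have hKeq : K = ⋂ k, C k := rfl
  have hKC : ∀ k, K ⊆ C k := fun k => hKeq ▸ Set.iInter_subset _ k
  have hKcl : IsClosed K := hKeq ▸ isClosed_iInter (fun k => (hCcomp k).isClosed)
  have hKcomp : IsCompact K := (hCcomp 0).of_isClosed_subset hKcl (hKC 0)
  have hKne : K.Nonempty := by
    rw [hKeq]
    exact IsCompact.nonempty_iInter_of_directed_nonempty_isCompact_isClosed C
      (fun i j => ⟨max i j, hmono (le_max_left _ _), hmono (le_max_right _ _)⟩)
      hCne hCcomp (fun k => (hCcomp k).isClosed)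
  obtain ⟨R₀, hR₀⟩ := isBounded_iff_forall_norm_le.mp (hCcomp 0).isBounded
  set R : ℝ := max R₀ 1 with hRdef
  have hR1 : (1:ℝ) ≤ R := le_max_right _ _
  have hRpos : (0:ℝ) < R := lt_of_lt_of_le one_pos hR1
  have hR : ∀ y ∈ C 0, ‖y‖ ≤ R := fun y hy => (hR₀ y hy).trans (le_max_left _ _)
  set h : EuclideanSpace ℝ (Fin d) → ℝ := fun x => sSup ((fun y => ⟪x, y⟫) '' K) with hhdef
  have hbdd : ∀ x, BddAbove ((fun y => ⟪x, y⟫) '' K) := by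
    intro x
    refine ⟨‖x‖ * R, ?_⟩
    rintro _ ⟨y, hy, rfl⟩
    calc ⟪x, y⟫ ≤ ‖x‖ * ‖y‖ := real_inner_le_norm x y
      _ ≤ ‖x‖ * R := by
          exact mul_le_mul_of_nonneg_left (hR y (hKC 0 hy)) (norm_nonneg x)
  have hne_im : ∀ x : EuclideanSpace ℝ (Fin d), ((fun y => ⟪x, y⟫) '' K).Nonempty :=
    fun x => hKne.image _
  have hle_h : ∀ x, ∀ y ∈ K, ⟪x, y⟫ ≤ h x := fun x y hy => le_csSup (hbdd x) ⟨y, hy, rfl⟩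
  have hhle : ∀ x x', h x ≤ h x' + R * ‖x - x'‖ := by
    intro x x'
    refine csSup_le (hne_im x) ?_
    rintro _ ⟨y, hy, rfl⟩
    have h1 : ⟪x, y⟫ = ⟪x', y⟫ + ⟪x - x', y⟫ := by
      rw [← inner_add_left]
      congr 1
      abel
    have h2 : ⟪x - x', y⟫ ≤ ‖x - x'‖ * ‖y‖ := real_inner_le_norm _ _
    have h3 : ‖y‖ ≤ R := hR y (hKC 0 hy)
    have h4 : ⟪x', y⟫ ≤ h x' := hle_h x' y hy
    nlinarith [norm_nonneg (x - x')]
  set g : EuclideanSpace ℝ (Fin d) → ℝ := fun x => h x - ‖x‖^2 with hgdef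
  have hg0 : ∀ x ∈ K, 0 ≤ g x := by
    intro x hx
    have := hle_h x x hx
    rw [real_inner_self_eq_norm_sq] at this
    simp only [hgdef]
    linarith
  -- if x ∈ K and g x = 0 then x ∈ clusterSet K
  have hgS : ∀ x ∈ K, g x = 0 → x ∈ clusterSet (limitK z) := by
    intro x hx hgx
    have hhx : h x = ‖x‖^2 := by
      have : h x - ‖x‖^2 = 0 := hgx
      linarith
    set l : EuclideanSpace ℝ (Fin d) →L[ℝ] ℝ := innerSL ℝ x with hldef
    set F := l.toExposed K with hFdef
    have hFexp : IsExposed ℝ K F := ContinuousLinearMap.toExposed.isExposed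
    have hFne : F.Nonempty := by
      obtain ⟨y, hy, hmax⟩ := hKcomp.exists_isMaxOn hKne l.continuous.continuousOn
      exact ⟨y, hy, fun w hw => hmax hw⟩
    have hFcomp : IsCompact F := hFexp.isCompact hKcomp
    obtain ⟨v, hv⟩ := hFcomp.extremePoints_nonempty hFne
    have hvK : v ∈ Set.extremePoints ℝ K :=
      hFexp.isExtreme.extremePoints_subset_extremePoints hv
    have hvF : v ∈ F := hv.1
    have hvmax : h x ≤ ⟪x, v⟫ := by
      refine csSup_le (hne_im x) ?_
      rintro _ ⟨w, hw, rfl⟩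
      exact hvF.2 w hw
    have hvle : ⟪x, v⟫ ≤ h x := hle_h x v hvF.1
    have hxv : ⟪x, v⟫ = ‖x‖^2 := by rw [← hhx]; linarith
    refine ⟨hx, ⟨v, hvK, ?_⟩, ?_⟩
    · show ⟪v - x, x⟫ = 0
      rw [inner_sub_left, real_inner_self_eq_norm_sq, real_inner_comm x v, hxv]
      ring
    · rintro p ⟨v', hv', rfl⟩
      have hub : ⟪x, v'⟫ ≤ h x := hle_h x v' hv'.1
      show ⟪v' - x, x⟫ ≤ 0
      rw [inner_sub_left, real_inner_self_eq_norm_sq, real_inner_comm x v']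
      rw [← hhx]
      linarith
  set S := clusterSet (limitK z) with hSdef
  set T := K ∩ {x | δ/2 ≤ infDist x S} with hTdef
  have hTcomp : IsCompact T :=
    hKcomp.inter_right (isClosed_le continuous_const (continuous_infDist_pt S))
  have hhcont : Continuous h := by
    refine (LipschitzWith.of_dist_le_mul (K := Real.toNNReal R) (f := h) ?_).continuous
    intro x y
    rw [Real.dist_eq, dist_eq_norm, Real.coe_toNNReal _ hRpos.le]
    rw [abs_sub_le_iff]
    constructor
    · linarith [hhle x y]
    · have h2 := hhle y x
      rw [norm_sub_rev] at h2
      linarith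
  have hgcont : Continuous g := hhcont.sub ((continuous_norm).pow 2)
  have hε : ∃ ε > 0, ∀ y ∈ T, ε ≤ g y := by
    rcases T.eq_empty_or_nonempty with hTe | hTne
    · exact ⟨1, one_pos, by simp [hTe]⟩
    · obtain ⟨y₀, hy₀T, hmin⟩ := hTcomp.exists_isMinOn hTne hgcont.continuousOn
      refine ⟨g y₀, ?_, fun y hy => hmin hy⟩
      rcases (hg0 y₀ hy₀T.1).lt_or_eq with hpos | heq
      · exact hpos
      · exfalso
        have hy₀S : y₀ ∈ S := hSdef ▸ hgS y₀ hy₀T.1 heq.symm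
        have : infDist y₀ S = 0 := infDist_zero_of_mem hy₀S
        have h2 := hy₀T.2
        simp only [Set.mem_setOf_eq] at h2
        rw [this] at h2
        linarith
  obtain ⟨ε, hεpos, hεT⟩ := hε
  set η : ℝ := min (δ/2) (ε/(10*R)) with hηdef
  have hηpos : 0 < η := lt_min (by linarith) (by positivity)
  obtain ⟨kδ, hkδ⟩ := exists_subset_nhds_of_isCompact'
    (V := C) (fun i j => ⟨max i j, hmono (le_max_left _ _), hmono (le_max_right _ _)⟩)
    hCcomp (fun k => (hCcomp k).isClosed)
    (U := thickening η K)
    (fun x hx => isOpen_thickening.mem_nhds (self_subset_thickening hηpos K (hKeq ▸ hx)))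
  refine ⟨kδ, θ * ε, by positivity, ?_⟩
  intro i k hk hfar
  set x := z k i with hxdef
  have hxCk : x ∈ C k := subset_convexHull ℝ _ (Set.mem_range_self i)
  have hxth : x ∈ thickening η K := hkδ (hmono hk hxCk)
  obtain ⟨y, hyK, hxy⟩ := mem_thickening_iff.mp hxth
  have hyT : y ∈ T := by
    refine ⟨hyK, ?_⟩
    have h1 : infDist x S ≤ infDist y S + dist x y := infDist_le_infDist_add_dist
    have hη1 : η ≤ δ/2 := min_le_left _ _
    simp only [Set.mem_setOf_eq]
    have : dist x y < δ/2 := lt_of_lt_of_le hxy hη1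
    linarith [hfar]
  have hgy : ε ≤ g y := hεT y hyT
  have hxC0 : x ∈ C 0 := hmono (Nat.zero_le k) hxCk
  have hyC0 : y ∈ C 0 := hKC 0 hyK
  have haR : ‖x‖ ≤ R := hR x hxC0
  have hbR : ‖y‖ ≤ R := hR y hyC0
  have htη : ‖x - y‖ < η := by rwa [← dist_eq_norm]
  have htRε : ‖x - y‖ * (10*R) ≤ ε := by
    have h2 : η ≤ ε/(10*R) := min_le_right _ _
    have h3 : ‖x - y‖ ≤ ε/(10*R) := le_of_lt (lt_of_lt_of_le htη h2)
    calc ‖x - y‖ * (10*R) ≤ (ε/(10*R)) * (10*R) :=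
          mul_le_mul_of_nonneg_right h3 (by positivity)
      _ = ε := by field_simp
  have hgx : ε/2 ≤ g x := by
    have l1 : h y ≤ h x + R * ‖y - x‖ := hhle y x
    have l1' : h y ≤ h x + R * ‖x - y‖ := by rwa [norm_sub_rev] at l1
    have hab : ‖x‖ ≤ ‖y‖ + ‖x - y‖ := by
      calc ‖x‖ = ‖y + (x - y)‖ := by congr 1; abel
        _ ≤ ‖y‖ + ‖x - y‖ := norm_add_le _ _
    have hta : ‖x - y‖ ≤ ‖x‖ + ‖y‖ := norm_sub_le x y
    have e1 : ‖x‖ * ‖x‖ ≤ (‖y‖ + ‖x - y‖) * (‖y‖ + ‖x - y‖) :=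
      mul_self_le_mul_self (norm_nonneg x) hab
    have e2 : ‖x - y‖ * ‖x - y‖ ≤ ‖x - y‖ * (2*R) :=
      mul_le_mul_of_nonneg_left (by linarith) (norm_nonneg _)
    have hgydef : g y = h y - ‖y‖^2 := rfl
    have hgxdef : g x = h x - ‖x‖^2 := rfl
    nlinarith [norm_nonneg (x - y), norm_nonneg y, norm_nonneg x,
      mul_le_mul_of_nonneg_left hbR (norm_nonneg (x - y))]
  -- support bound: h x ≤ sup over tokens
  have hMge : h x ≤ ⨆ ℓ, ⟪x, z k ℓ⟫ := by
    refine csSup_le (hne_im x) ?_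
    rintro _ ⟨w, hw, rfl⟩
    exact inner_le_isup hn (z k) x w (hKC k hw)
  have hgrow := growth hn hα hdyn k i
  have hfinal : ε/2 ≤ (⨆ ℓ, ⟪x, z k ℓ⟫) - ‖x‖^2 := by
    have : g x = h x - ‖x‖^2 := rfl
    linarith
  calc ‖x‖^2 + θ * ε = ‖x‖^2 + 2*θ*(ε/2) := by ring
    _ ≤ ‖x‖^2 + 2*θ*((⨆ ℓ, ⟪x, z k ℓ⟫) - ‖x‖^2) := by nlinarith
    _ ≤ ‖z (k+1) i‖^2 := hgrow

end
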